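/- Let $a(p)$ denote the maximum, over all injective identifier assignments to a path of $p$ internal nodes flanked by two endpoint 'marked' nodes with larger identifiers than all internal nodes, of the sum of running times of the internal nodes under the grow-until-dominated leader election algorithm. Then $a$ satisfies $a(p) = \max_{1 \leq k \leq \lceil p/2 \rceil} \{k + a(k-1) + a(p-k)\}$ with $a(0) = 0$, $a(1) = 1$. -/

import Mathlib

/-- Running time of node `i` of the path `0, 1, …, p+1` under the grow-until-dominated
algorithm: the least radius `k` at which `i` sees a node with a larger identifier. -/
noncomputable def pathRuntime (p : ℕ) (I : ℕ → ℕ) (i : ℕ) : ℕ :=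
  sInf {k | ∃ j, j ≤ p + 1 ∧ j ≤ i + k ∧ i ≤ j + k ∧ I i < I j}

/-- Identifier assignments on the path `0, …, p+1` which are injective and whose two
endpoint ("marked") identifiers exceed all internal ones. -/
def validID (p : ℕ) (I : ℕ → ℕ) : Prop :=
  Set.InjOn I (Set.Icc 0 (p + 1)) ∧
    ∀ i, 1 ≤ i → i ≤ p → I i < I 0 ∧ I i < I (p + 1)

/-- `aMax p`: the maximum, over all valid identifier assignments, of the sum of running
times of the `p` internal nodes. -/
noncomputable def aMax (p : ℕ) : ℕ :=
  sSup {s | ∃ I : ℕ → ℕ, validID p I ∧ s = ∑ i ∈ Finset.Icc 1 p, pathRuntime p I i}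

def sumSet (p : ℕ) : Set ℕ :=
  {s | ∃ I : ℕ → ℕ, validID p I ∧ s = ∑ i ∈ Finset.Icc 1 p, pathRuntime p I i}

lemma aMax_def (p : ℕ) : aMax p = sSup (sumSet p) := rfl

lemma runtime_le (p : ℕ) (I : ℕ → ℕ) (i j k : ℕ) (hj : j ≤ p + 1)
    (h1 : j ≤ i + k) (h2 : i ≤ j + k) (h : I i < I j) : pathRuntime p I i ≤ k :=
  Nat.sInf_le ⟨j, hj, h1, h2, h⟩

lemma runtime_le_left (p : ℕ) (I : ℕ → ℕ) (i : ℕ) (h : I i < I 0) :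
    pathRuntime p I i ≤ i :=
  runtime_le p I i 0 i (by omega) (by omega) (by omega) h

lemma pathRuntime_congr (p : ℕ) (I J : ℕ → ℕ) (i : ℕ)
    (h : ∀ j, j ≤ p + 1 → (I i < I j ↔ J i < J j)) :
    pathRuntime p I i = pathRuntime p J i := by
  unfold pathRuntime
  congr 1
  ext k
  constructor <;> rintro ⟨j, h1, h2, h3, h4⟩
  · exact ⟨j, h1, h2, h3, (h j h1).mp h4⟩
  · exact ⟨j, h1, h2, h3, (h j h1).mpr h4⟩

lemma split_left (p m i : ℕ) (I : ℕ → ℕ) (hmp : m ≤ p) (hi1 : 1 ≤ i) (him : i < m)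
    (hmax : I i < I m) : pathRuntime p I i = pathRuntime (m - 1) I i := by
  have hSne : (Set.Nonempty {k | ∃ j, j ≤ p + 1 ∧ j ≤ i + k ∧ i ≤ j + k ∧ I i < I j}) :=
    ⟨m - i, m, by omega, by omega, by omega, hmax⟩
  have hTne : (Set.Nonempty {k | ∃ j, j ≤ m - 1 + 1 ∧ j ≤ i + k ∧ i ≤ j + k ∧ I i < I j}) :=
    ⟨m - i, m, by omega, by omega, by omega, hmax⟩
  have hle : pathRuntime p I i ≤ m - i :=
    runtime_le p I i m (m - i) (by omega) (by omega) (by omega) hmax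
  apply le_antisymm
  · have hmem : ∃ j, j ≤ m - 1 + 1 ∧ j ≤ i + pathRuntime (m - 1) I i ∧
        i ≤ j + pathRuntime (m - 1) I i ∧ I i < I j := Nat.sInf_mem hTne
    obtain ⟨j, hj1, hj2, hj3, hj4⟩ := hmem
    exact runtime_le p I i j _ (by omega) hj2 hj3 hj4
  · have hmem : ∃ j, j ≤ p + 1 ∧ j ≤ i + pathRuntime p I i ∧
        i ≤ j + pathRuntime p I i ∧ I i < I j := Nat.sInf_mem hSne
    obtain ⟨j, hj1, hj2, hj3, hj4⟩ := hmem
    exact Nat.sInf_le ⟨j, by omega, hj2, hj3, hj4⟩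

lemma split_right (p m i : ℕ) (I : ℕ → ℕ) (hmi : m < i) (hip : i ≤ p)
    (hmax : I i < I m) :
    pathRuntime p I i = pathRuntime (p - m) (fun t => I (t + m)) (i - m) := by
  have hik : i - m + m = i := by omega
  have hSne : (Set.Nonempty {k | ∃ j, j ≤ p + 1 ∧ j ≤ i + k ∧ i ≤ j + k ∧ I i < I j}) :=
    ⟨i - m, m, by omega, by omega, by omega, hmax⟩
  have hTne : (Set.Nonempty {k | ∃ j, j ≤ (p - m) + 1 ∧ j ≤ (i - m) + k ∧
      (i - m) ≤ j + k ∧ (fun t => I (t + m)) (i - m) < (fun t => I (t + m)) j}) :=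
    ⟨i - m, 0, by omega, by omega, by omega, by simpa [hik] using hmax⟩
  have hle : pathRuntime p I i ≤ i - m :=
    runtime_le p I i m (i - m) (by omega) (by omega) (by omega) hmax
  apply le_antisymm
  · have hmem : ∃ j, j ≤ (p - m) + 1 ∧
        j ≤ (i - m) + pathRuntime (p - m) (fun t => I (t + m)) (i - m) ∧
        (i - m) ≤ j + pathRuntime (p - m) (fun t => I (t + m)) (i - m) ∧
        (fun t => I (t + m)) (i - m) < (fun t => I (t + m)) j := Nat.sInf_mem hTne
    obtain ⟨j, hj1, hj2, hj3, hj4⟩ := hmem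
    simp only [hik] at hj4
    exact runtime_le p I i (j + m) _ (by omega) (by omega) (by omega) hj4
  · have hmem : ∃ j, j ≤ p + 1 ∧ j ≤ i + pathRuntime p I i ∧
        i ≤ j + pathRuntime p I i ∧ I i < I j := Nat.sInf_mem hSne
    obtain ⟨j, hj1, hj2, hj3, hj4⟩ := hmem
    have hjm : m ≤ j := by omega
    refine Nat.sInf_le ⟨j - m, by omega, by omega, by omega, ?_⟩
    simp only [hik]
    have hjj : j - m + m = j := by omega
    rw [hjj]; exact hj4

lemma runtime_max (p m : ℕ) (I : ℕ → ℕ) (hv : validID p I) (hm1 : 1 ≤ m) (hmp : m ≤ p)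
    (hmax : ∀ i, 1 ≤ i → i ≤ p → i ≠ m → I i < I m) :
    pathRuntime p I m = min m (p + 1 - m) := by
  have h0 : I m < I 0 := (hv.2 m hm1 hmp).1
  have hP : I m < I (p + 1) := (hv.2 m hm1 hmp).2
  have hSne : (Set.Nonempty {k | ∃ j, j ≤ p + 1 ∧ j ≤ m + k ∧ m ≤ j + k ∧ I m < I j}) :=
    ⟨m, 0, by omega, by omega, by omega, h0⟩
  apply le_antisymm
  · rcases le_total m (p + 1 - m) with h | h
    · have hmin : min m (p + 1 - m) = m := by omega
      rw [hmin]
      exact runtime_le p I m 0 m (by omega) (by omega) (by omega) h0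
    · have hmin : min m (p + 1 - m) = p + 1 - m := by omega
      rw [hmin]
      exact runtime_le p I m (p + 1) (p + 1 - m) (by omega) (by omega) (by omega) hP
  · have hmem : ∃ j, j ≤ p + 1 ∧ j ≤ m + pathRuntime p I m ∧
        m ≤ j + pathRuntime p I m ∧ I m < I j := Nat.sInf_mem hSne
    obtain ⟨j, hj1, hj2, hj3, hj4⟩ := hmem
    by_cases hj0 : j = 0
    · subst hj0; omega
    by_cases hjP : j = p + 1
    · subst hjP; omega
    · exfalso
      have hjm : j ≠ m := by rintro rfl; exact lt_irrefl _ hj4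
      have := hmax j (by omega) (by omega) hjm
      omega

lemma sumSet_nonempty (p : ℕ) : (sumSet p).Nonempty := by
  refine ⟨_, (fun i => if i = 0 then p + 2 else if i = p + 1 then p + 3 else i), ?_, rfl⟩
  constructor
  · intro x hx y hy h
    simp only [Set.mem_Icc] at hx hy
    simp only at h
    split_ifs at h <;> omega
  · intro i h1 h2
    have hi0 : i ≠ 0 := by omega
    have hiP : i ≠ p + 1 := by omega
    refine ⟨?_, ?_⟩ <;> · show (if _ then _ else _) < _
                          rw [if_neg hi0, if_neg hiP]
                          beta_reduce
                          split <;> (try split) <;> omega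

lemma sumSet_bddAbove (p : ℕ) : BddAbove (sumSet p) := by
  refine ⟨∑ i ∈ Finset.Icc 1 p, i, ?_⟩
  rintro s ⟨I, hI, rfl⟩
  apply Finset.sum_le_sum
  intro i hi
  simp only [Finset.mem_Icc] at hi
  exact runtime_le_left p I i (hI.2 i hi.1 hi.2).1

lemma aMax_mem (p : ℕ) : aMax p ∈ sumSet p :=
  Nat.sSup_mem (sumSet_nonempty p) (sumSet_bddAbove p)

lemma le_aMax {p s : ℕ} (h : s ∈ sumSet p) : s ≤ aMax p :=
  le_csSup (sumSet_bddAbove p) h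

lemma sum_split (p m : ℕ) (hm1 : 1 ≤ m) (hmp : m ≤ p) (f : ℕ → ℕ) :
    ∑ i ∈ Finset.Icc 1 p, f i =
      (∑ i ∈ Finset.Icc 1 (m - 1), f i) + f m + ∑ i ∈ Finset.Icc (m + 1) p, f i := by
  have h1 : Finset.Icc 1 p = Finset.Icc 1 m ∪ Finset.Icc (m + 1) p := by
    ext x; simp only [Finset.mem_Icc, Finset.mem_union]; omega
  have h2 : Finset.Icc 1 m = Finset.Icc 1 (m - 1) ∪ {m} := by
    ext x; simp only [Finset.mem_Icc, Finset.mem_union, Finset.mem_singleton]; omega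
  have d1 : Disjoint (Finset.Icc 1 m) (Finset.Icc (m + 1) p) := by
    rw [Finset.disjoint_left]; intro a ha hb
    simp only [Finset.mem_Icc] at ha hb; omega
  have d2 : Disjoint (Finset.Icc 1 (m - 1)) ({m} : Finset ℕ) := by
    rw [Finset.disjoint_left]; intro a ha hb
    simp only [Finset.mem_Icc] at ha
    simp only [Finset.mem_singleton] at hb; omega
  rw [h1, Finset.sum_union d1, h2, Finset.sum_union d2, Finset.sum_singleton]

lemma sum_shift (m p : ℕ) (hmp : m ≤ p) (f : ℕ → ℕ) :
    ∑ i ∈ Finset.Icc (m + 1) p, f i = ∑ t ∈ Finset.Icc 1 (p - m), f (m + t) := by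
  have h : Finset.Icc (m + 1) p = Finset.map (addLeftEmbedding m) (Finset.Icc 1 (p - m)) := by
    rw [Finset.map_add_left_Icc]
    congr 1
    omega
  rw [h, Finset.sum_map]
  apply Finset.sum_congr rfl
  intro t _
  rw [addLeftEmbedding_apply]

lemma aMax_zero : aMax 0 = 0 := by
  obtain ⟨I, hI, hs⟩ := aMax_mem 0
  simpa using hs

lemma aMax_one : aMax 1 = 1 := by
  obtain ⟨I, hI, hs⟩ := aMax_mem 1
  rw [hs]
  rw [show Finset.Icc 1 1 = {1} by rfl, Finset.sum_singleton]
  have h0 : I 1 < I 0 := (hI.2 1 le_rfl le_rfl).1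
  have hle : pathRuntime 1 I 1 ≤ 1 :=
    runtime_le 1 I 1 0 1 (by omega) (by omega) (by omega) h0
  have hSne : Set.Nonempty {k | ∃ j, j ≤ 1 + 1 ∧ j ≤ 1 + k ∧ 1 ≤ j + k ∧ I 1 < I j} :=
    ⟨1, 0, by omega, by omega, by omega, h0⟩
  have hmem : ∃ j, j ≤ 1 + 1 ∧ j ≤ 1 + pathRuntime 1 I 1 ∧ 1 ≤ j + pathRuntime 1 I 1 ∧
      I 1 < I j := Nat.sInf_mem hSne
  obtain ⟨j, hj1, hj2, hj3, hj4⟩ := hmem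
  have hne : pathRuntime 1 I 1 ≠ 0 := by
    intro h
    rw [h] at hj2 hj3
    have : j = 1 := by omega
    subst this
    exact lt_irrefl _ hj4
  omega

lemma aMax_le_sup (p : ℕ) (hp : 2 ≤ p) :
    aMax p ≤ (Finset.Icc 1 ((p + 1) / 2)).sup
      (fun k => k + aMax (k - 1) + aMax (p - k)) := by
  obtain ⟨I, hI, hs⟩ := aMax_mem p
  obtain ⟨m, hmmem, hmmax⟩ := Finset.exists_max_image (Finset.Icc 1 p) I
    ⟨1, Finset.mem_Icc.mpr ⟨le_rfl, by omega⟩⟩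
  simp only [Finset.mem_Icc] at hmmem
  obtain ⟨hm1, hmp⟩ := hmmem
  have hstrict : ∀ i, 1 ≤ i → i ≤ p → i ≠ m → I i < I m := by
    intro i h1 h2 hne
    have hle := hmmax i (Finset.mem_Icc.mpr ⟨h1, h2⟩)
    rcases lt_or_eq_of_le hle with h | h
    · exact h
    · exact absurd (hI.1 (Set.mem_Icc.mpr ⟨by omega, by omega⟩)
        (Set.mem_Icc.mpr ⟨by omega, by omega⟩) h) hne
  have hm' : m - 1 + 1 = m := by omega
  -- the left piece
  have hvalidL : validID (m - 1) I := by
    constructor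
    · intro x hx y hy h
      simp only [Set.mem_Icc] at hx hy
      exact hI.1 (Set.mem_Icc.mpr ⟨by omega, by omega⟩)
        (Set.mem_Icc.mpr ⟨by omega, by omega⟩) h
    · intro i h1 h2
      refine ⟨(hI.2 i h1 (by omega)).1, ?_⟩
      rw [hm']
      exact hstrict i h1 (by omega) (by omega)
  have hsumL : (∑ i ∈ Finset.Icc 1 (m - 1), pathRuntime p I i) ≤ aMax (m - 1) := by
    have he : ∀ i ∈ Finset.Icc 1 (m - 1), pathRuntime p I i = pathRuntime (m - 1) I i := by
      intro i hi
      simp only [Finset.mem_Icc] at hi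
      exact split_left p m i I hmp hi.1 (by omega)
        (hstrict i hi.1 (by omega) (by omega))
    rw [Finset.sum_congr rfl he]
    exact le_aMax ⟨I, hvalidL, rfl⟩
  -- the right piece
  have hvalidR : validID (p - m) (fun t => I (t + m)) := by
    constructor
    · intro x hx y hy h
      simp only [Set.mem_Icc] at hx hy
      have := hI.1 (Set.mem_Icc.mpr (⟨by omega, by omega⟩ : 0 ≤ x + m ∧ x + m ≤ p + 1))
        (Set.mem_Icc.mpr (⟨by omega, by omega⟩ : 0 ≤ y + m ∧ y + m ≤ p + 1)) h
      omega
    · intro t h1 h2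
      constructor
      · show I (t + m) < I (0 + m)
        rw [Nat.zero_add]
        exact hstrict (t + m) (by omega) (by omega) (by omega)
      · show I (t + m) < I (p - m + 1 + m)
        rw [show p - m + 1 + m = p + 1 by omega]
        exact (hI.2 (t + m) (by omega) (by omega)).2
  have hsumR : (∑ i ∈ Finset.Icc (m + 1) p, pathRuntime p I i) ≤ aMax (p - m) := by
    have he : ∀ i ∈ Finset.Icc (m + 1) p,
        pathRuntime p I i = pathRuntime (p - m) (fun t => I (t + m)) (i - m) := by
      intro i hi
      simp only [Finset.mem_Icc] at hi
      exact split_right p m i I (by omega) hi.2 (hstrict i (by omega) hi.2 (by omega))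
    rw [Finset.sum_congr rfl he, sum_shift m p hmp]
    refine le_aMax ⟨fun t => I (t + m), hvalidR, ?_⟩
    apply Finset.sum_congr rfl
    intro t _
    congr 1
    omega
  have hmid : pathRuntime p I m = min m (p + 1 - m) :=
    runtime_max p m I hI hm1 hmp hstrict
  rw [hs, sum_split p m hm1 hmp, hmid]
  set k := min m (p + 1 - m) with hk
  have hk1 : 1 ≤ k := by omega
  have hk2 : k ≤ (p + 1) / 2 := by omega
  have hterm := Finset.le_sup (f := fun k => k + aMax (k - 1) + aMax (p - k))
    (Finset.mem_Icc.mpr ⟨hk1, hk2⟩)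
  rcases le_total m (p + 1 - m) with h | h
  · have hkm : k = m := by omega
    rw [hkm] at hterm
    omega
  · have hkm : k = p + 1 - m := by omega
    have e1 : k - 1 = p - m := by omega
    have e2 : p - k = m - 1 := by omega
    rw [e1, e2] at hterm
    omega

lemma term_le_aMax (p k : ℕ) (hp : 2 ≤ p) (hk1 : 1 ≤ k) (hk2 : k ≤ (p + 1) / 2) :
    k + aMax (k - 1) + aMax (p - k) ≤ aMax p := by
  have hkp : k ≤ p := by omega
  have h2k : 2 * k ≤ p + 1 := by omega
  obtain ⟨IL, hIL, hsL⟩ := aMax_mem (k - 1)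
  obtain ⟨IR, hIR, hsR⟩ := aMax_mem (p - k)
  set M := (Finset.range (p + 2)).sup (fun i => max (IL i) (IR i)) with hM
  have hMle : ∀ i, i ≤ p + 1 → IL i ≤ M ∧ IR i ≤ M := by
    intro i hi
    have := Finset.le_sup (f := fun i => max (IL i) (IR i))
      (Finset.mem_range.mpr (show i < p + 2 by omega))
    exact ⟨le_trans (le_max_left _ _) this, le_trans (le_max_right _ _) this⟩
  set B := 2 * M + 2 with hB
  set I : ℕ → ℕ := fun i => if i = 0 then B + 2 else if i = p + 1 then B + 3
    else if i = k then B + 1 else if i < k then 2 * IL i else 2 * IR (i - k) + 1 with hIdef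
  have hI0 : I 0 = B + 2 := by simp [hIdef]
  have hIP : I (p + 1) = B + 3 := by simp [hIdef]
  have hIk : I k = B + 1 := by
    have e1 : k ≠ 0 := by omega
    have e2 : k ≠ p + 1 := by omega
    simp [hIdef, e1, e2]
  have hIleft : ∀ i, 1 ≤ i → i < k → I i = 2 * IL i := by
    intro i h1 h2
    have e1 : i ≠ 0 := by omega
    have e2 : i ≠ p + 1 := by omega
    have e3 : i ≠ k := by omega
    simp [hIdef, e1, e2, e3, h2]
  have hIright : ∀ i, k < i → i ≤ p → I i = 2 * IR (i - k) + 1 := by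
    intro i h1 h2
    have e1 : i ≠ 0 := by omega
    have e2 : i ≠ p + 1 := by omega
    have e3 : i ≠ k := by omega
    have e4 : ¬ i < k := by omega
    simp [hIdef, e1, e2, e3, e4]
  have hval : ∀ i, 1 ≤ i → i ≤ p → i ≠ k → I i ≤ 2 * M + 1 := by
    intro i h1 h2 hne
    rcases lt_or_gt_of_ne hne with h | h
    · rw [hIleft i h1 h]
      have := (hMle i (by omega)).1; omega
    · rw [hIright i h h2]
      have := (hMle (i - k) (by omega)).2; omega
  have hvalid : validID p I := by
    constructor
    · intro x hx y hy h
      simp only [Set.mem_Icc] at hx hy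
      have hbLx := (hMle x (by omega)).1
      have hbRx := (hMle (x - k) (by omega)).2
      have hbLy := (hMle y (by omega)).1
      have hbRy := (hMle (y - k) (by omega)).2
      have hxc : x = 0 ∨ x = p + 1 ∨ x = k ∨ (1 ≤ x ∧ x < k) ∨ (k < x ∧ x ≤ p) := by omega
      have hyc : y = 0 ∨ y = p + 1 ∨ y = k ∨ (1 ≤ y ∧ y < k) ∨ (k < y ∧ y ≤ p) := by omega
      rcases hxc with rfl | rfl | rfl | ⟨hx1, hx2⟩ | ⟨hx1, hx2⟩ <;>
        rcases hyc with rfl | rfl | rfl | ⟨hy1, hy2⟩ | ⟨hy1, hy2⟩ <;>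
        (try simp only [hI0, hIP, hIk] at h) <;>
        (try rw [hIleft x hx1 hx2] at h) <;>
        (try rw [hIright x hx1 hx2] at h) <;>
        (try rw [hIleft y hy1 hy2] at h) <;>
        (try rw [hIright y hy1 hy2] at h) <;>
        (try omega)
      · -- both in left segment
        have hxy : IL x = IL y := by omega
        exact hIL.1 (Set.mem_Icc.mpr ⟨by omega, by omega⟩)
          (Set.mem_Icc.mpr ⟨by omega, by omega⟩) hxy
      · -- both in right segment
        have hxy : IR (x - k) = IR (y - k) := by omega
        have := hIR.1 (Set.mem_Icc.mpr (⟨by omega, by omega⟩ : 0 ≤ x - k ∧ x - k ≤ p - k + 1))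
          (Set.mem_Icc.mpr (⟨by omega, by omega⟩ : 0 ≤ y - k ∧ y - k ≤ p - k + 1)) hxy
        omega
    · intro i h1 h2
      by_cases h : i = k
      · subst h; rw [hIk, hI0, hIP]; exact ⟨by omega, by omega⟩
      · have := hval i h1 h2 h
        rw [hI0, hIP]; exact ⟨by omega, by omega⟩
  -- runtime of node k
  have hmid : pathRuntime p I k = k := by
    have hmx := runtime_max p k I hvalid hk1 hkp (fun i h1 h2 hne => by
      rw [hIk]; have := hval i h1 h2 hne; omega)
    rw [hmx, min_eq_left (by omega)]
  have hk' : k - 1 + 1 = k := by omega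
  -- left runtimes
  have hleft : ∀ i ∈ Finset.Icc 1 (k - 1), pathRuntime p I i = pathRuntime (k - 1) IL i := by
    intro i hi
    simp only [Finset.mem_Icc] at hi
    obtain ⟨hi1, hi2⟩ := hi
    have hik : i < k := by omega
    have hIlt : I i < I k := by
      rw [hIk]; have := hval i hi1 (by omega) (by omega); omega
    rw [split_left p k i I hkp hi1 hik hIlt]
    apply pathRuntime_congr
    intro j hj
    rw [hk'] at hj
    have hIi : I i = 2 * IL i := hIleft i hi1 hik
    have hMi : IL i ≤ M := (hMle i (by omega)).1
    have hjc : j = 0 ∨ j = k ∨ (1 ≤ j ∧ j < k) := by omega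
    rcases hjc with rfl | hjk | ⟨hj1, hj2⟩
    · rw [hI0, hIi]
      have hR : IL i < IL 0 := (hIL.2 i hi1 (by omega)).1
      exact ⟨fun _ => hR, fun _ => by omega⟩
    · rw [hjk, hIk, hIi]
      have hR : IL i < IL (k - 1 + 1) := (hIL.2 i hi1 (by omega)).2
      rw [hk'] at hR
      exact ⟨fun _ => hR, fun _ => by omega⟩
    · rw [hIi, hIleft j hj1 hj2]
      constructor <;> intro <;> omega
  -- right runtimes
  have hright : ∀ i ∈ Finset.Icc (k + 1) p,
      pathRuntime p I i = pathRuntime (p - k) IR (i - k) := by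
    intro i hi
    simp only [Finset.mem_Icc] at hi
    obtain ⟨hi1, hi2⟩ := hi
    have hki : k < i := by omega
    have hIlt : I i < I k := by
      rw [hIk]; have := hval i (by omega) hi2 (by omega); omega
    rw [split_right p k i I hki hi2 hIlt]
    apply pathRuntime_congr
    intro j hj
    show I (i - k + k) < I (j + k) ↔ IR (i - k) < IR j
    rw [show i - k + k = i by omega]
    have hIi : I i = 2 * IR (i - k) + 1 := hIright i hki hi2
    have hMi : IR (i - k) ≤ M := (hMle (i - k) (by omega)).2
    have hjc : j = 0 ∨ j = p - k + 1 ∨ (1 ≤ j ∧ j ≤ p - k) := by omega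
    rcases hjc with rfl | rfl | ⟨hj1, hj2⟩
    · rw [show (0 : ℕ) + k = k by omega, hIk, hIi]
      have hR : IR (i - k) < IR 0 := (hIR.2 (i - k) (by omega) (by omega)).1
      exact ⟨fun _ => hR, fun _ => by omega⟩
    · rw [show p - k + 1 + k = p + 1 by omega, hIP, hIi]
      have hR : IR (i - k) < IR (p - k + 1) := (hIR.2 (i - k) (by omega) (by omega)).2
      exact ⟨fun _ => hR, fun _ => by omega⟩
    · rw [hIi, hIright (j + k) (by omega) (by omega), show j + k - k = j by omega]
      constructor <;> intro <;> omega
  -- assemble the total sum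
  have hsum : ∑ i ∈ Finset.Icc 1 p, pathRuntime p I i
      = aMax (k - 1) + k + aMax (p - k) := by
    rw [sum_split p k hk1 hkp, hmid, Finset.sum_congr rfl hleft,
      Finset.sum_congr rfl hright, sum_shift k p hkp]
    simp only [Nat.add_sub_cancel_left]
    rw [hsL, hsR]
  have := le_aMax ⟨I, hvalid, hsum.symm⟩
  omega



/-- The worst-case sum of running times on a path of `p` internal nodes flanked by two
larger-identifier endpoints satisfies `a 0 = 0`, `a 1 = 1` and
`a p = max_{1 ≤ k ≤ ⌈p/2⌉} (k + a (k-1) + a (p-k))`. -/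
theorem stmt_13 :
    aMax 0 = 0 ∧ aMax 1 = 1 ∧
    ∀ p, 2 ≤ p →
      aMax p = (Finset.Icc 1 ((p + 1) / 2)).sup
        (fun k => k + aMax (k - 1) + aMax (p - k)) := by
  refine ⟨aMax_zero, aMax_one, fun p hp => ?_⟩
  apply le_antisymm
  · exact aMax_le_sup p hp
  · apply Finset.sup_le
    intro k hk
    simp only [Finset.mem_Icc] at hk
    exact term_le_aMax p k hp hk.1 hk.2
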